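/- Let P and P_ε be Markov kernels on X with π stationary for P, P acting on L²(π) through T_P and L²(π)-geometrically ergodic with rate 1−α, P_ε acting on L²(π) through T_ε, ‖T_P − T_ε‖ ≤ ε, and 0 < ε < α. Suppose P_ε has a stationary probability measure π_ε with π_ε ≪ π and π ≪ π_ε, and that πP_εⁿ → π_ε in total variation as n → ∞. Then dπ_ε/dπ ∈ L²(π) and ‖π_ε‖₂ ≤ α/(α−ε). -/

import Mathlib

open MeasureTheory ProbabilityTheory Filter ENNReal

variable {X : Type*} [MeasurableSpace X]

/-- The real-valued Radon–Nikodym density of `μ` with respect to `π`. -/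
noncomputable def rnd (π μ : Measure X) (x : X) : ℝ := (μ.rnDeriv π x).toReal

/-- `n`-fold action of the kernel `P` on the measure `μ`, i.e. `μPⁿ`. -/
noncomputable def mIter (P : Kernel X X) (n : ℕ) (μ : Measure X) : Measure X :=
  (fun ν => ν.bind (fun x => P x))^[n] μ

/-- `n`-fold composition of the kernel `P`, i.e. `Pⁿ`. -/
noncomputable def kpow (P : Kernel X X) : ℕ → Kernel X X
  | 0 => Kernel.id
  | n + 1 => (kpow P n).comp P

/-- `‖μ − ν‖₂`, the `L²(π)` distance between the `π`-densities of `μ` and `ν`. -/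
noncomputable def d2 (π μ ν : Measure X) : ℝ :=
  (eLpNorm (fun x => rnd π μ x - rnd π ν x) 2 π).toReal

/-- `‖μ − ν‖₁`, the `L¹(π)` distance between the `π`-densities of `μ` and `ν`. -/
noncomputable def d1 (π μ ν : Measure X) : ℝ := ∫ x, |rnd π μ x - rnd π ν x| ∂π

/-- `P` acts on `L²(π)` through the bounded linear operator `T`:
for every probability measure `μ ≪ π` with `dμ/dπ ∈ L²(π)`,
`T(dμ/dπ)` is a version of `d(μP)/dπ`. -/
def ActsOn (π : Measure X) (P : Kernel X X) (T : Lp ℝ 2 π →L[ℝ] Lp ℝ 2 π) : Prop :=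
  ∀ μ : Measure X, IsProbabilityMeasure μ → μ ≪ π →
    ∀ h : MemLp (rnd π μ) 2 π,
      ⇑(T (h.toLp (rnd π μ))) =ᵐ[π] rnd π (μ.bind (fun x => P x))

/-- `L²(π)`-geometric ergodicity with rate `1 − α`:
`T` contracts mean-zero functions by the factor `1 − α`. -/
def IsGeomErg (π : Measure X) (T : Lp ℝ 2 π →L[ℝ] Lp ℝ 2 π) (α : ℝ) : Prop :=
  ∀ f : Lp ℝ 2 π, ∫ x, f x ∂π = 0 → ‖T f‖ ≤ (1 - α) * ‖f‖

/-- Reversibility of `P` with respect to `π`. -/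
def Reversible (π : Measure X) (P : Kernel X X) : Prop :=
  ∀ A B : Set X, MeasurableSet A → MeasurableSet B →
    ∫⁻ x in A, P x B ∂π = ∫⁻ x in B, P x A ∂π

/-- `∫ h dPᵏ(x,·)`, the `k`-step forward operator applied to `h`. -/
noncomputable def kInt (P : Kernel X X) (k : ℕ) (h : X → ℝ) (x : X) : ℝ :=
  ∫ y, h y ∂(kpow P k x)

/-- `μPᵏh = ∫∫ h(y) Pᵏ(x,dy) μ(dx)`. -/
noncomputable def mkInt (P : Kernel X X) (μ : Measure X) (k : ℕ) (h : X → ℝ) : ℝ :=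
  ∫ x, kInt P k h x ∂μ

/-- Path covariance `Cov_μ(f(X_t), g(X_{t+s}))` of the chain with kernel `P` started at `μ`. -/
noncomputable def covPath (P : Kernel X X) (μ : Measure X) (t s : ℕ) (f g : X → ℝ) : ℝ :=
  ∫ x, (∫ y, (∫ z, (f y - mkInt P μ t f) * (g z - mkInt P μ (t + s) g)
    ∂(kpow P s y)) ∂(kpow P t x)) ∂μ

/-- Path covariance `Cov_μ(f(X_m), g(X_n))` of the chain with kernel `P` started at `μ`. -/
noncomputable def covPath2 (P : Kernel X X) (μ : Measure X) (m n : ℕ) (f g : X → ℝ) : ℝ :=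
  ∫ x, (∫ y, (∫ z, (f y - mkInt P μ (min m n) f) * (g z - mkInt P μ (max m n) g)
    ∂(kpow P (max m n - min m n) y)) ∂(kpow P (min m n) x)) ∂μ

lemma isProbabilityMeasure_bind_aux (μ : Measure X) (hμ : IsProbabilityMeasure μ)
    (P : Kernel X X) [IsMarkovKernel P] :
    IsProbabilityMeasure (μ.bind (fun x => P x)) := by
  constructor
  rw [Measure.bind_apply MeasurableSet.univ P.measurable.aemeasurable]
  simp [measure_univ]

lemma bind_ac_aux {μ ν : Measure X} (P : Kernel X X) (h : μ ≪ ν) :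
    μ.bind (fun x => P x) ≪ ν.bind (fun x => P x) := by
  refine Measure.AbsolutelyContinuous.mk (fun s hs h0 => ?_)
  rw [Measure.bind_apply hs P.measurable.aemeasurable] at h0 ⊢
  have h1 : (fun x => P x s) =ᵐ[ν] 0 := (lintegral_eq_zero_iff (P.measurable_coe hs)).mp h0
  exact (lintegral_eq_zero_iff (P.measurable_coe hs)).mpr (h.ae_eq h1)

lemma lintegral_sub_rnDeriv_le_aux (π μ ν : Measure X) [IsFiniteMeasure π]
    [IsFiniteMeasure μ] [IsFiniteMeasure ν] (hμ : μ ≪ π) (hν : ν ≪ π) :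
    ∫⁻ x, (μ.rnDeriv π x - ν.rnDeriv π x) ∂π ≤ (μ - ν) Set.univ := by
  set f := μ.rnDeriv π with hfdef
  set h := ν.rnDeriv π with hhdef
  have hf : Measurable f := Measure.measurable_rnDeriv μ π
  have hh : Measurable h := Measure.measurable_rnDeriv ν π
  set A : Set X := {x | h x < f x} with hA
  have hAm : MeasurableSet A := measurableSet_lt hh hf
  have hres : ν.restrict A ≤ μ.restrict A := by
    refine Measure.le_iff.mpr fun s hs => ?_
    rw [Measure.restrict_apply hs, Measure.restrict_apply hs,
      ← Measure.setLIntegral_rnDeriv hν (s ∩ A), ← Measure.setLIntegral_rnDeriv hμ (s ∩ A)]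
    exact setLIntegral_mono hf (fun x hx => le_of_lt hx.2)
  have hineq : (μ - ν) A = μ A - ν A := by
    rw [← Measure.restrict_apply_self (μ - ν) A,
      Measure.restrict_sub_eq_restrict_sub_restrict hAm,
      Measure.sub_apply hAm hres, Measure.restrict_apply_self, Measure.restrict_apply_self]
  have hcompl : ∫⁻ x in Aᶜ, (f x - h x) ∂π = 0 := by
    rw [setLIntegral_congr_fun hAm.compl
      (fun x hx => tsub_eq_zero_of_le (not_lt.mp hx))]
    simp
  have hhfin : ∫⁻ x in A, h x ∂π ≠ ∞ := by
    rw [Measure.setLIntegral_rnDeriv hν A]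
    exact measure_ne_top ν A
  have hsplit : ∫⁻ x, (f x - h x) ∂π = ∫⁻ x in A, (f x - h x) ∂π := by
    rw [← lintegral_add_compl (fun x => f x - h x) hAm, hcompl, add_zero]
  have hsub : ∫⁻ x in A, (f x - h x) ∂π = μ A - ν A := by
    rw [lintegral_sub hh hhfin ((ae_restrict_iff' hAm).mpr
      (Filter.Eventually.of_forall (fun x hx => le_of_lt hx))),
      Measure.setLIntegral_rnDeriv hμ A, Measure.setLIntegral_rnDeriv hν A]
  calc ∫⁻ x, (f x - h x) ∂π = μ A - ν A := by rw [hsplit, hsub]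
    _ = (μ - ν) A := hineq.symm
    _ ≤ (μ - ν) Set.univ := measure_mono (Set.subset_univ A)

lemma abs_toReal_sub_aux {a b : ℝ≥0∞} (ha : a ≠ ∞) (hb : b ≠ ∞) :
    |a.toReal - b.toReal| = ((a - b) + (b - a)).toReal := by
  rcases le_total a b with hab | hab
  · rw [tsub_eq_zero_of_le hab, zero_add, ENNReal.toReal_sub_of_le hab hb, abs_sub_comm,
      abs_of_nonneg (sub_nonneg.mpr (ENNReal.toReal_mono hb hab))]
  · rw [tsub_eq_zero_of_le hab, add_zero, ENNReal.toReal_sub_of_le hab ha,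
      abs_of_nonneg (sub_nonneg.mpr (ENNReal.toReal_mono ha hab))]

/-- If `ε < α`, `π ≪ π_ε ≪ π` and `πP_εⁿ → π_ε` in total variation, then
`dπ_ε/dπ ∈ L²(π)` with `‖π_ε‖₂ ≤ α/(α−ε)`. -/
theorem stmt3 (π : Measure X) [IsProbabilityMeasure π] (P Pe : Kernel X X)
    [IsMarkovKernel P] [IsMarkovKernel Pe]
    (hstat : π.bind (fun x => P x) = π)
    (α ε : ℝ) (hα0 : 0 < α) (hα1 : α < 1) (hε0 : 0 < ε) (hεα : ε < α)
    (T Te : Lp ℝ 2 π →L[ℝ] Lp ℝ 2 π) (hT : ActsOn π P T) (hTe : ActsOn π Pe Te)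
    (hge : IsGeomErg π T α) (hdiff : ‖T - Te‖ ≤ ε)
    (πe : Measure X) [IsProbabilityMeasure πe] (hstate : πe.bind (fun x => Pe x) = πe)
    (hac1 : πe ≪ π) (hac2 : π ≪ πe)
    (htv : Tendsto (fun n => (mIter Pe n π - πe) Set.univ + (πe - mIter Pe n π) Set.univ)
      atTop (nhds 0)) :
    MemLp (rnd π πe) 2 π ∧ (eLpNorm (rnd π πe) 2 π).toReal ≤ α / (α - ε) := by
  classical
  have hαε : (0:ℝ) < α - ε := by linarith
  set c : ℝ := ε / (α - ε) with hc
  have hc0 : 0 ≤ c := le_of_lt (div_pos hε0 hαε)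
  set μ : ℕ → Measure X := fun n => mIter Pe n π with hμdef
  have hμ0 : μ 0 = π := rfl
  have hμs : ∀ n, μ (n+1) = (μ n).bind (fun x => Pe x) := by
    intro n
    simp only [hμdef, mIter, Function.iterate_succ_apply']
  have hprob : ∀ n, IsProbabilityMeasure (μ n) := by
    intro n; induction n with
    | zero => rw [hμ0]; infer_instance
    | succ n ih => rw [hμs n]; exact isProbabilityMeasure_bind_aux _ ih Pe
  have hace : ∀ n, μ n ≪ πe := by
    intro n; induction n with
    | zero => rw [hμ0]; exact hac2
    | succ n ih => rw [hμs n, ← hstate]; exact bind_ac_aux Pe ih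
  have hacπ : ∀ n, μ n ≪ π := fun n => (hace n).trans hac1
  haveI : ∀ n, IsFiniteMeasure (μ n) := fun n => by haveI := hprob n; infer_instance
  -- the constant function 1 as an element of L²(π)
  have h1mem : MemLp (fun _ : X => (1:ℝ)) 2 π := memLp_const 1
  set oneL : Lp ℝ 2 π := h1mem.toLp _ with honeL
  have hone_coe : ⇑oneL =ᵐ[π] fun _ => (1:ℝ) := h1mem.coeFn_toLp
  have hone_norm : ‖oneL‖ = 1 := by
    rw [honeL, Lp.norm_toLp, eLpNorm_const (1:ℝ) two_ne_zero (IsProbabilityMeasure.ne_zero π)]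
    simp
  have hone_int : ∫ x, oneL x ∂π = 1 := by
    rw [integral_congr_ae hone_coe]; simp
  have hππ : rnd π π =ᵐ[π] fun _ => (1:ℝ) := by
    filter_upwards [Measure.rnDeriv_self π] with x hx
    simp [rnd, hx]
  have hππmem : MemLp (rnd π π) 2 π := h1mem.ae_eq hππ.symm
  have hT1 : T oneL = oneL := by
    have hππ_toLp : hππmem.toLp (rnd π π) = oneL :=
      Lp.ext (hππmem.coeFn_toLp.trans (hππ.trans hone_coe.symm))
    apply Lp.ext
    have hact := hT π inferInstance Measure.AbsolutelyContinuous.rfl hππmem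
    rw [hππ_toLp] at hact
    refine hact.trans ?_
    rw [hstat]
    exact hππ.trans hone_coe.symm
  -- key induction: the density of `μ n` is in `L²` with distance at most `c` from 1
  have key : ∀ n, ∃ h : MemLp (rnd π (μ n)) 2 π, ‖h.toLp (rnd π (μ n)) - oneL‖ ≤ c := by
    intro n; induction n with
    | zero =>
      have hm : MemLp (rnd π (μ 0)) 2 π := hππmem
      refine ⟨hm, ?_⟩
      have : hm.toLp (rnd π (μ 0)) = oneL :=
        Lp.ext (hm.coeFn_toLp.trans (hππ.trans hone_coe.symm))
      rw [this, sub_self, norm_zero]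
      exact hc0
    | succ n ih =>
      obtain ⟨hm, hb⟩ := ih
      set u : Lp ℝ 2 π := hm.toLp (rnd π (μ n)) with hudef
      have hver : ⇑(Te u) =ᵐ[π] rnd π (μ (n+1)) := by
        have := hTe (μ n) (hprob n) (hacπ n) hm
        rw [← hμs n] at this
        exact this
      have hm' : MemLp (rnd π (μ (n+1))) 2 π := (Lp.memLp (Te u)).ae_eq hver
      refine ⟨hm', ?_⟩
      have htoLp : hm'.toLp (rnd π (μ (n+1))) = Te u :=
        Lp.ext (hm'.coeFn_toLp.trans hver.symm)
      rw [htoLp]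
      have hnu : ‖u‖ ≤ 1 + c := by
        have : u = (u - oneL) + oneL := by abel
        calc ‖u‖ = ‖(u - oneL) + oneL‖ := by rw [← this]
          _ ≤ ‖u - oneL‖ + ‖oneL‖ := norm_add_le _ _
          _ ≤ c + 1 := add_le_add hb hone_norm.le
          _ = 1 + c := by ring
      have hint : ∫ x, (u - oneL) x ∂π = 0 := by
        have hcoe : ⇑(u - oneL) =ᵐ[π] fun x => u x - oneL x := Lp.coeFn_sub u oneL
        have hintu : ∫ x, u x ∂π = 1 := by
          rw [integral_congr_ae hm.coeFn_toLp]
          have h2 := Measure.integral_toReal_rnDeriv (hacπ n)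
          simpa [rnd, measure_univ] using h2
        rw [integral_congr_ae hcoe,
          integral_sub ((Lp.memLp u).integrable one_le_two)
            ((Lp.memLp oneL).integrable one_le_two),
          hintu, hone_int, sub_self]
      have h1 : ‖T (u - oneL)‖ ≤ (1 - α) * ‖u - oneL‖ := hge _ hint
      have h2 : ‖(Te - T) u‖ ≤ ε * ‖u‖ := by
        have hop := (Te - T).le_opNorm u
        have hnorm : ‖Te - T‖ = ‖T - Te‖ := by
          rw [← norm_neg (T - Te)]; congr 1; abel
        have : ‖Te - T‖ ≤ ε := by rw [hnorm]; exact hdiff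
        calc ‖(Te - T) u‖ ≤ ‖Te - T‖ * ‖u‖ := hop
          _ ≤ ε * ‖u‖ := mul_le_mul_of_nonneg_right this (norm_nonneg u)
      have hdecomp : Te u - oneL = T (u - oneL) + (Te - T) u := by
        simp only [map_sub, hT1, ContinuousLinearMap.sub_apply]
        abel
      have hkey : c * (α - ε) = ε := by
        rw [hc]; field_simp
      calc ‖Te u - oneL‖ = ‖T (u - oneL) + (Te - T) u‖ := by rw [hdecomp]
        _ ≤ ‖T (u - oneL)‖ + ‖(Te - T) u‖ := norm_add_le _ _
        _ ≤ (1 - α) * ‖u - oneL‖ + ε * ‖u‖ := add_le_add h1 h2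
        _ ≤ (1 - α) * c + ε * (1 + c) := by
            have hα' : (0:ℝ) ≤ 1 - α := by linarith
            exact add_le_add (mul_le_mul_of_nonneg_left hb hα')
              (mul_le_mul_of_nonneg_left hnu hε0.le)
        _ = c := by nlinarith [hkey]
  -- uniform L² bound on the densities
  have hbound : ∀ n, eLpNorm (rnd π (μ n)) 2 π ≤ ENNReal.ofReal (1 + c) := by
    intro n
    obtain ⟨hm, hb⟩ := key n
    have hno : ‖hm.toLp (rnd π (μ n))‖ ≤ 1 + c := by
      have : hm.toLp (rnd π (μ n)) = (hm.toLp (rnd π (μ n)) - oneL) + oneL := by abel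
      calc ‖hm.toLp (rnd π (μ n))‖ = ‖(hm.toLp (rnd π (μ n)) - oneL) + oneL‖ := by rw [← this]
        _ ≤ ‖hm.toLp (rnd π (μ n)) - oneL‖ + ‖oneL‖ := norm_add_le _ _
        _ ≤ c + 1 := add_le_add hb hone_norm.le
        _ = 1 + c := by ring
    rw [Lp.norm_toLp] at hno
    exact (ENNReal.le_ofReal_iff_toReal_le hm.2.ne (by linarith)).mpr hno
  -- total variation controls the L¹(π) distance of densities
  set fe : ℕ → X → ℝ≥0∞ := fun n => (μ n).rnDeriv π with hfe
  set ge : X → ℝ≥0∞ := πe.rnDeriv π with hge'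
  set D : ℕ → ℝ≥0∞ := fun n =>
    (∫⁻ x, (fe n x - ge x) ∂π) + ∫⁻ x, (ge x - fe n x) ∂π with hDdef
  have hDle : ∀ n, D n ≤ (μ n - πe) Set.univ + (πe - μ n) Set.univ := fun n =>
    add_le_add (lintegral_sub_rnDeriv_le_aux π _ _ (hacπ n) hac1)
      (lintegral_sub_rnDeriv_le_aux π _ _ hac1 (hacπ n))
  have hD0 : Tendsto D atTop (nhds 0) := by
    refine tendsto_of_tendsto_of_tendsto_of_le_of_le tendsto_const_nhds htv
      (fun n => zero_le) hDle
  -- choose a subsequence with summable TV distances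
  have hsel : ∀ k : ℕ, ∃ n, D n ≤ (2:ℝ≥0∞)⁻¹ ^ k := by
    intro k
    have hpos : (0:ℝ≥0∞) < 2⁻¹ ^ k := pos_iff_ne_zero.mpr (pow_ne_zero k (by simp))
    exact ((ENNReal.tendsto_nhds_zero.mp hD0) _ hpos).exists
  choose m hmsel using hsel
  set d : ℕ → X → ℝ≥0∞ := fun k x => (fe (m k) x - ge x) + (ge x - fe (m k) x) with hddef
  have hdm : ∀ k, Measurable (d k) := fun k =>
    ((Measure.measurable_rnDeriv _ _).sub (Measure.measurable_rnDeriv _ _)).add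
      ((Measure.measurable_rnDeriv _ _).sub (Measure.measurable_rnDeriv _ _))
  have hsum : ∑' k, D (m k) ≠ ∞ := by
    refine ne_top_of_le_ne_top ?_ (ENNReal.tsum_le_tsum hmsel)
    rw [ENNReal.tsum_geometric, ENNReal.one_sub_inv_two]
    simp
  have hlint : ∫⁻ x, ∑' k, d k x ∂π ≠ ∞ := by
    rw [lintegral_tsum (fun k => (hdm k).aemeasurable)]
    have heq : ∀ k, ∫⁻ x, d k x ∂π = D (m k) := by
      intro k
      rw [hddef, hDdef]
      exact lintegral_add_left
        ((Measure.measurable_rnDeriv _ _).sub (Measure.measurable_rnDeriv _ _)) _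
    rw [tsum_congr heq]
    exact hsum
  have hae1 : ∀ᵐ x ∂π, (∑' k, d k x) ≠ ∞ :=
    (ae_lt_top (Measurable.ennreal_tsum hdm) hlint).mono fun x hx => hx.ne
  have hae2 : ∀ᵐ x ∂π, ge x ≠ ∞ :=
    (Measure.rnDeriv_lt_top πe π).mono fun x hx => hx.ne
  have hae3 : ∀ᵐ x ∂π, ∀ k, fe (m k) x ≠ ∞ :=
    ae_all_iff.mpr fun k => (Measure.rnDeriv_lt_top _ _).mono fun x hx => hx.ne
  have haelim : ∀ᵐ x ∂π,
      Tendsto (fun k => rnd π (μ (m k)) x) atTop (nhds (rnd π πe x)) := by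
    filter_upwards [hae1, hae2, hae3] with x h1 h2 h3
    have hd0 : Tendsto (fun k => d k x) atTop (nhds 0) :=
      ENNReal.tendsto_atTop_zero_of_tsum_ne_top h1
    have habs : ∀ k, |rnd π (μ (m k)) x - rnd π πe x| = (d k x).toReal := fun k =>
      abs_toReal_sub_aux (h3 k) h2
    have htr : Tendsto (fun k => (d k x).toReal) atTop (nhds 0) := by
      have := (ENNReal.tendsto_toReal (a := 0) (by simp)).comp hd0
      exact this
    rw [tendsto_iff_dist_tendsto_zero]
    simp only [Real.dist_eq]
    simpa [habs] using htr
  have hmeasg : AEStronglyMeasurable (rnd π πe) π :=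
    ((Measure.measurable_rnDeriv πe π).ennreal_toReal).aestronglyMeasurable
  have hFatou :=
    Lp.eLpNorm_lim_le_liminf_eLpNorm (μ := π) (p := 2)
      (fun k => ((Measure.measurable_rnDeriv (μ (m k)) π).ennreal_toReal).aestronglyMeasurable)
      (rnd π πe) haelim
  have hliminf : (atTop.liminf fun k => eLpNorm (rnd π (μ (m k))) 2 π)
      ≤ ENNReal.ofReal (1 + c) := by
    calc (atTop.liminf fun k => eLpNorm (rnd π (μ (m k))) 2 π)
        ≤ atTop.liminf (fun _ : ℕ => ENNReal.ofReal (1 + c)) :=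
          Filter.liminf_le_liminf (Filter.Eventually.of_forall fun k => hbound (m k))
      _ = ENNReal.ofReal (1 + c) := Filter.liminf_const _
  have hfin : eLpNorm (rnd π πe) 2 π ≤ ENNReal.ofReal (1 + c) := hFatou.trans hliminf
  have hmem : MemLp (rnd π πe) 2 π :=
    ⟨hmeasg, lt_of_le_of_lt hfin ENNReal.ofReal_lt_top⟩
  refine ⟨hmem, ?_⟩
  have h1c : 1 + c = α / (α - ε) := by
    rw [hc]; field_simp; ring
  have := ENNReal.toReal_le_of_le_ofReal (by linarith) hfin
  rwa [h1c] at this
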